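/- Let p be a prime, s ≥ 1, and let L = ℚ(ζ) be the p^s-th cyclotomic field over ℚ with ζ a primitive p^s-th root of unity. Let K be an intermediate field of L/ℚ such that ζ^{p^{s−1}} ∈ K, and such that if p = 2 then s ≥ 2 and ζ^{2^{s−2}} ∈ K. Let i be an integer with ζ^i ∉ K and let d be the least natural number such that ζ^{i·p^d} ∈ K. Then [K(ζ^i) : K] = p^d and the minimal polynomial of ζ^i over K is X^{p^d} − ζ^{i·p^d}. -/

import Mathlib

open Polynomial IntermediateField

theorem aux_two_pow (d : ℕ) :
    ∀ {K : Type*} [Field K], ∀ (j : K), j ^ 2 = -1 → ∀ {a : K}, (∀ b : K, b ^ 2 ≠ a) →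
      Irreducible (X ^ (2 ^ d) - C a) := by
  induction d with
  | zero => intro K _ j hj a ha; simpa using irreducible_X_sub_C a
  | succ d IH =>
    intro K _ j hj a ha
    rw [pow_succ]
    apply X_pow_mul_sub_C_irreducible (X_pow_sub_C_irreducible_of_prime Nat.prime_two ha)
    intro E _ _ x hx
    have hint : IsIntegral K x := not_not.mp fun h ↦ by
      simpa only [degree_zero, degree_X_pow_sub_C Nat.prime_two.pos,
        WithBot.natCast_ne_bot] using congr_arg degree (hx.symm.trans (dif_neg h))
    apply IH (algebraMap K K⟮x⟯ j) (by rw [← map_pow, hj, map_neg, map_one])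
    intro b hb
    apply ha (j * Algebra.norm K b)
    have : (Algebra.norm K b) ^ 2 = Algebra.norm K (AdjoinSimple.gen K x) := by
      rw [← map_pow, hb]
    rw [mul_pow, hj, this, ← adjoin.powerBasis_gen hint,
      Algebra.PowerBasis.norm_gen_eq_coeff_zero_minpoly]
    simp [IntermediateField.minpoly_gen, hx]

theorem stmt_12 (p : ℕ) (hp : p.Prime) (s : ℕ) (hs : 1 ≤ s)
    (N : ℕ+) (hN : (N : ℕ) = p ^ s)
    (ζ : CyclotomicField N ℚ) (hζ : IsPrimitiveRoot ζ (p ^ s))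
    (K : IntermediateField ℚ (CyclotomicField N ℚ))
    (hK : ζ ^ (p ^ (s - 1)) ∈ K)
    (hK2 : p = 2 → 2 ≤ s ∧ ζ ^ (2 ^ (s - 2)) ∈ K)
    (i : ℤ) (hi : ζ ^ i ∉ K)
    (d : ℕ) (hd : IsLeast {d : ℕ | ζ ^ (i * (p : ℤ) ^ d) ∈ K} d) :
    Module.finrank K (IntermediateField.adjoin K {ζ ^ i}) = p ^ d ∧
      minpoly K (ζ ^ i) =
        X ^ (p ^ d) - C (⟨ζ ^ (i * (p : ℤ) ^ d), hd.1⟩ : K) := by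
  have : NeZero (p ^ s) := ⟨pow_ne_zero s hp.ne_zero⟩
  set A : K := (⟨ζ ^ (i * (p : ℤ) ^ d), hd.1⟩ : K) with hA
  have hzne : ζ ≠ 0 := hζ.ne_zero (pow_ne_zero s hp.ne_zero)
  have hd0 : d ≠ 0 := by
    rintro rfl
    exact hi (by simpa using hd.1)
  have hd1 : d - 1 + 1 = d := by omega
  have hs1 : s - 1 + 1 = s := by omega
  -- A is not a p-th power in K
  have ha : ∀ b : K, b ^ p ≠ A := by
    intro b hb
    have hb' : (b : CyclotomicField N ℚ) ^ p = ζ ^ (i * (p : ℤ) ^ d) :=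
      congrArg Subtype.val hb
    have hy : (ζ ^ (i * (p : ℤ) ^ (d - 1))) ^ p = ζ ^ (i * (p : ℤ) ^ d) := by
      rw [← zpow_natCast, ← zpow_mul, mul_assoc, ← pow_succ, hd1]
    have hyne : ζ ^ (i * (p : ℤ) ^ (d - 1)) ≠ 0 := zpow_ne_zero _ hzne
    set y : CyclotomicField N ℚ := ζ ^ (i * (p : ℤ) ^ (d - 1)) with hydef
    have hxp : ((b : CyclotomicField N ℚ) / y) ^ p = 1 := by
      rw [div_pow, hb', ← hy, div_self (pow_ne_zero _ hyne)]
    have hxps : ((b : CyclotomicField N ℚ) / y) ^ (p ^ s) = 1 := by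
      have hps : p ^ s = p * p ^ (s - 1) := by
        rw [← pow_succ', hs1]
      rw [hps, pow_mul, hxp, one_pow]
    obtain ⟨k, -, hk⟩ := hζ.eq_pow_of_pow_eq_one hxps
    have hdvd : p ^ s ∣ k * p := by
      rw [← hζ.pow_eq_one_iff_dvd, pow_mul, hk, hxp]
    have : p ^ (s - 1) ∣ k := by
      have h1 : p ^ (s - 1) * p ∣ k * p := by
        rwa [← pow_succ, hs1]
      exact (mul_dvd_mul_iff_right hp.ne_zero).mp h1
    obtain ⟨m, rfl⟩ := this
    have hxK : (b : CyclotomicField N ℚ) / y ∈ K := by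
      rw [← hk, pow_mul]
      exact pow_mem hK m
    have hyK : y ∈ K := by
      have hbne : (b : CyclotomicField N ℚ) / y ≠ 0 := by
        intro h
        rw [h, zero_pow hp.ne_zero] at hxp
        exact one_ne_zero hxp.symm
      have hb0 : (b : CyclotomicField N ℚ) ≠ 0 := by
        intro h
        rw [h, zero_pow hp.ne_zero] at hb'
        exact (zpow_ne_zero _ hzne) hb'.symm
      have hbx : y = (b : CyclotomicField N ℚ) / ((b : CyclotomicField N ℚ) / y) := by
        field_simp
      rw [hbx]
      exact div_mem b.2 hxK
    have := hd.2 hyK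
    omega
  -- irreducibility
  have hirr : Irreducible (X ^ (p ^ d) - C A) := by
    rcases eq_or_ne p 2 with h2 | h2
    · obtain ⟨hs2, hj⟩ := hK2 h2
      subst h2
      refine aux_two_pow d (⟨ζ ^ (2 ^ (s - 2)), hj⟩ : K) ?_ ha
      ext
      push_cast
      rw [← pow_mul, ← pow_succ, show s - 2 + 1 = s - 1 by omega]
      have h2s : (2 : ℕ) ^ s = 2 ^ (s - 1) * 2 := by
        rw [← pow_succ, hs1]
      exact (hζ.pow (pow_pos (by norm_num) s) h2s).eq_neg_one_of_two_right
    · exact X_pow_sub_C_irreducible_of_prime_pow hp h2 d ha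
  have hroot : (aeval (ζ ^ i)) (X ^ (p ^ d) - C A) = 0 := by
    rw [map_sub, map_pow, aeval_X, aeval_C]
    have h1 : (ζ ^ i) ^ (p ^ d) = ζ ^ (i * (p : ℤ) ^ d) := by
      rw [← zpow_natCast, ← zpow_mul]
      push_cast
      ring_nf
    rw [h1]
    show ζ ^ (i * (p : ℤ) ^ d) - (A : CyclotomicField N ℚ) = 0
    rw [hA, sub_self]
  have hmin : minpoly K (ζ ^ i) = X ^ (p ^ d) - C A :=
    (minpoly.eq_of_irreducible_of_monic hirr hroot
      (monic_X_pow_sub_C _ (pow_ne_zero d hp.ne_zero))).symm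
  have hfin : FiniteDimensional ℚ (CyclotomicField N ℚ) :=
    inferInstance
  have hint : IsIntegral K (ζ ^ i) := by
    have : FiniteDimensional K (CyclotomicField N ℚ) :=
      FiniteDimensional.right ℚ K (CyclotomicField N ℚ)
    exact IsIntegral.of_finite K _
  refine ⟨?_, hmin⟩
  rw [IntermediateField.adjoin.finrank hint, hmin, natDegree_X_pow_sub_C]
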